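/- arXiv:0904.0919 — 4 statements merged into one kernel-verified Lean document; each statement's English description precedes it below -/
import Mathlib

section
/- Let m ≥ 4 be an even natural number and l ≥ 1 a natural number. Consider S := sum over odd k with 1 ≤ k ≤ m-1 of [ binom(m-1, k-1) * (1 - k/2)^l + binom(m-1, k) * (-k/2)^l ]. Then S < 0 if l is odd, and S > 0 if l is even. -/
theorem stmt_7 (m l : ℕ) (hm : 4 ≤ m) (hme : Even m) (hl : 1 ≤ l) :
    (Odd l →
      ∑ k ∈ (Finset.Icc 1 (m - 1)).filter (fun k => Odd k),
        (((m - 1).choose (k - 1) : ℝ) * (1 - (k : ℝ) / 2) ^ l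
          + ((m - 1).choose k : ℝ) * (-(k : ℝ) / 2) ^ l) < 0) ∧
    (Even l →
      0 < ∑ k ∈ (Finset.Icc 1 (m - 1)).filter (fun k => Odd k),
        (((m - 1).choose (k - 1) : ℝ) * (1 - (k : ℝ) / 2) ^ l
          + ((m - 1).choose k : ℝ) * (-(k : ℝ) / 2) ^ l)) := by
  have h1mem : (1 : ℕ) ∈ (Finset.Icc 1 (m - 1)).filter (fun k => Odd k) := by
    simp only [Finset.mem_filter, Finset.mem_Icc]
    exact ⟨⟨le_refl 1, by omega⟩, odd_one⟩
  constructor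
  · intro hlo
    apply Finset.sum_neg
    · intro k hk
      simp only [Finset.mem_filter, Finset.mem_Icc] at hk
      obtain ⟨⟨hk1, hk2⟩, hko⟩ := hk
      rcases eq_or_lt_of_le hk1 with h1 | h3
      · -- k = 1
        subst h1
        simp only [Nat.cast_one, Nat.sub_self, Nat.choose_zero_right,
          Nat.choose_one_right, Nat.cast_one]
        have hmr : (3 : ℝ) ≤ ((m - 1 : ℕ) : ℝ) := by
          have : (3 : ℕ) ≤ m - 1 := by omega
          exact_mod_cast this
        have hpow : (-(1 : ℝ) / 2) ^ l = -((1 : ℝ) / 2) ^ l := by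
          rw [neg_div, hlo.neg_pow]
        rw [hpow]
        have hp : (0 : ℝ) < ((1 : ℝ) / 2) ^ l := by positivity
        nlinarith
      · -- k ≥ 3
        have hk3 : 3 ≤ k := by
          rcases hko with ⟨j, hj⟩; omega
        have hkr : (3 : ℝ) ≤ (k : ℝ) := by exact_mod_cast hk3
        have hn1 : (1 : ℝ) - (k : ℝ) / 2 < 0 := by linarith
        have hn2 : -(k : ℝ) / 2 < 0 := by linarith
        have hp1 : (0 : ℝ) < ((m - 1).choose (k - 1) : ℝ) := by
          exact_mod_cast Nat.choose_pos (by omega)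
        have hp2 : (0 : ℝ) < ((m - 1).choose k : ℝ) := by
          exact_mod_cast Nat.choose_pos hk2
        have := hlo.pow_neg hn1
        have := hlo.pow_neg hn2
        nlinarith
    · exact ⟨1, h1mem⟩
  · intro hle
    apply Finset.sum_pos'
    · intro k hk
      have h1 := hle.pow_nonneg (a := (1 : ℝ) - (k : ℝ) / 2)
      have h2 := hle.pow_nonneg (a := -(k : ℝ) / 2)
      positivity
    · refine ⟨1, h1mem, ?_⟩
      simp only [Nat.cast_one, Nat.sub_self, Nat.choose_zero_right,
        Nat.choose_one_right, Nat.cast_one]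
      have h2 := hle.pow_nonneg (a := -(1 : ℝ) / 2)
      have hp : (0 : ℝ) < (1 - (1 : ℝ) / 2) ^ l := by norm_num
      have hmr : (0 : ℝ) ≤ ((m - 1 : ℕ) : ℝ) := by positivity
      nlinarith
end

section
/- Let m ≥ 3 be an odd natural number and l ≥ 1 a natural number. Consider S := sum over all k with 1 ≤ k ≤ m of [ binom(m-1, k-1) * (1 - k/2)^l + binom(m-1, k) * (-k/2)^l ]. Then S < 0 if l is odd, and S > 0 if l is even. -/
theorem stmt_8 (m l : ℕ) (hm : 3 ≤ m) (hmo : Odd m) (hl : 1 ≤ l) :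
    (Odd l →
      ∑ k ∈ Finset.Icc 1 m,
        (((m - 1).choose (k - 1) : ℝ) * (1 - (k : ℝ) / 2) ^ l
          + ((m - 1).choose k : ℝ) * (-(k : ℝ) / 2) ^ l) < 0) ∧
    (Even l →
      0 < ∑ k ∈ Finset.Icc 1 m,
        (((m - 1).choose (k - 1) : ℝ) * (1 - (k : ℝ) / 2) ^ l
          + ((m - 1).choose k : ℝ) * (-(k : ℝ) / 2) ^ l)) := by
  have hmem : (1 : ℕ) ∈ Finset.Icc 1 m := by simp; omega
  have hc0 : (m - 1).choose 0 = 1 := Nat.choose_zero_right _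
  have hc1 : (m - 1).choose 1 = m - 1 := Nat.choose_one_right _
  have hcast : (2 : ℝ) ≤ ((m - 1).choose 1 : ℝ) := by
    rw [hc1]
    exact_mod_cast (by omega : 2 ≤ m - 1)
  constructor
  · intro hlo
    have key : ∀ k ∈ Finset.Icc 1 m, (((m - 1).choose (k - 1) : ℝ) * (1 - (k : ℝ) / 2) ^ l
          + ((m - 1).choose k : ℝ) * (-(k : ℝ) / 2) ^ l) ≤ (0 : ℝ) := by
      intro k hk
      simp only [Finset.mem_Icc] at hk
      rcases Nat.lt_or_ge k 2 with h2 | h2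
      · -- k = 1
        have hk1 : k = 1 := by omega
        subst hk1
        have : (-(1 : ℝ) / 2) ^ l = -((1:ℝ)/2) ^ l := by
          rw [show (-(1:ℝ)/2) = -((1:ℝ)/2) by ring, hlo.neg_pow]
        simp only [Nat.cast_one, this, hc0, show (1:ℕ) - 1 = 0 from rfl]
        have hp : (0:ℝ) < ((1:ℝ)/2) ^ l := by positivity
        have : (1 - (1:ℝ)/2) ^ l = ((1:ℝ)/2) ^ l := by norm_num
        rw [this]
        nlinarith [hcast]
      · -- k ≥ 2
        have h1 : (1 - (k : ℝ) / 2) ≤ 0 := by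
          have : (2:ℝ) ≤ (k:ℝ) := by exact_mod_cast h2
          linarith
        have h2' : (-(k : ℝ) / 2) ≤ 0 := by
          have : (0:ℝ) ≤ (k:ℝ) := Nat.cast_nonneg k
          linarith
        have p1 : (1 - (k : ℝ) / 2) ^ l ≤ 0 := hlo.pow_nonpos h1
        have p2 : (-(k : ℝ) / 2) ^ l ≤ 0 := hlo.pow_nonpos h2'
        have n1 : (0:ℝ) ≤ ((m - 1).choose (k - 1) : ℝ) := Nat.cast_nonneg _
        have n2 : (0:ℝ) ≤ ((m - 1).choose k : ℝ) := Nat.cast_nonneg _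
        nlinarith
    have hstrict : ∃ k ∈ Finset.Icc 1 m, (((m - 1).choose (k - 1) : ℝ) * (1 - (k : ℝ) / 2) ^ l
          + ((m - 1).choose k : ℝ) * (-(k : ℝ) / 2) ^ l) < (0 : ℝ) := by
      refine ⟨1, hmem, ?_⟩
      have hneg : (-(1 : ℝ) / 2) ^ l = -((1:ℝ)/2) ^ l := by
        rw [show (-(1:ℝ)/2) = -((1:ℝ)/2) by ring, hlo.neg_pow]
      simp only [Nat.cast_one, hneg, hc0, show (1:ℕ) - 1 = 0 from rfl]
      have hp : (0:ℝ) < ((1:ℝ)/2) ^ l := by positivity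
      have : (1 - (1:ℝ)/2) ^ l = ((1:ℝ)/2) ^ l := by norm_num
      rw [this]
      nlinarith [hcast]
    calc ∑ k ∈ Finset.Icc 1 m,
        (((m - 1).choose (k - 1) : ℝ) * (1 - (k : ℝ) / 2) ^ l
          + ((m - 1).choose k : ℝ) * (-(k : ℝ) / 2) ^ l)
        < ∑ k ∈ Finset.Icc 1 m, (0:ℝ) := by
          refine Finset.sum_lt_sum key ?_
          exact hstrict
      _ = 0 := by simp
  · intro hle
    have key : ∀ k ∈ Finset.Icc 1 m, (0:ℝ) ≤ (((m - 1).choose (k - 1) : ℝ) * (1 - (k : ℝ) / 2) ^ l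
          + ((m - 1).choose k : ℝ) * (-(k : ℝ) / 2) ^ l) := by
      intro k hk
      have p1 : (0:ℝ) ≤ (1 - (k : ℝ) / 2) ^ l := hle.pow_nonneg _
      have p2 : (0:ℝ) ≤ (-(k : ℝ) / 2) ^ l := hle.pow_nonneg _
      have n1 : (0:ℝ) ≤ ((m - 1).choose (k - 1) : ℝ) := Nat.cast_nonneg _
      have n2 : (0:ℝ) ≤ ((m - 1).choose k : ℝ) := Nat.cast_nonneg _
      positivity
    have hstrict : (0:ℝ) < (((m - 1).choose (1 - 1) : ℝ) * (1 - (1 : ℝ) / 2) ^ l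
          + ((m - 1).choose 1 : ℝ) * (-(1 : ℝ) / 2) ^ l) := by
      have p1 : (0:ℝ) < (1 - (1 : ℝ) / 2) ^ l := by norm_num
      have p2 : (0:ℝ) ≤ (-(1 : ℝ) / 2) ^ l := hle.pow_nonneg _
      simp only [hc0, show (1:ℕ) - 1 = 0 from rfl]
      nlinarith [hcast]
    refine Finset.sum_pos' key ⟨1, hmem, ?_⟩
    simpa using hstrict
end

section
/- Let l ≥ 2, 1 ≤ k ≤ l, and let n be an odd positive integer. Set h_1 = 2, h_2 = h_3 = -1, and h_i = 0 for 4 ≤ i ≤ l+1. Then the sum over all k-element subsets S of {1, ..., l+1} of (sum_{i in S} h_i)^n equals (2^n - 2) * ( binom(l-2, k-1) - binom(l-2, k-2) ), with the convention binom(a, b) = 0 for b < 0 or b > a. -/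
open Finset in
lemma key2 {α : Type*} [DecidableEq α] (a b : Finset α) (hab : Disjoint a b) (k : ℕ)
    (G : Finset α → ℤ) :
    ∑ S ∈ powersetCard k (a ∪ b), G (S ∩ a)
      = ∑ T ∈ a.powerset, if T.card ≤ k then (b.card.choose (k - T.card) : ℤ) * G T else 0 := by
  have step : ∑ S ∈ powersetCard k (a ∪ b), G (S ∩ a)
      = ∑ p ∈ a.powerset.sigma (fun T => if T.card ≤ k then b.powersetCard (k - T.card) else ∅),
          G p.1 := by
    apply Finset.sum_bij' (fun S _ => (⟨S ∩ a, S ∩ b⟩ : Σ _ : Finset α, Finset α))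
      (fun p _ => p.1 ∪ p.2)
    · intro S hS
      rw [mem_powersetCard] at hS
      have hcard : (S ∩ a).card + (S ∩ b).card = k := by
        rw [← card_union_of_disjoint (hab.mono inter_subset_right inter_subset_right)]
        rw [← inter_union_distrib_left, inter_eq_left.2 hS.1, hS.2]
      rw [mem_sigma]
      dsimp only
      refine ⟨mem_powerset.2 inter_subset_right, ?_⟩
      rw [if_pos (by omega)]
      exact mem_powersetCard.2 ⟨inter_subset_right, by omega⟩
    · intro p hp
      rw [mem_sigma] at hp
      obtain ⟨h1, h2⟩ := hp
      by_cases hc : p.1.card ≤ k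
      · rw [if_pos hc, mem_powersetCard] at h2
        rw [mem_powersetCard]
        constructor
        · exact union_subset_union (mem_powerset.1 h1) h2.1
        · rw [card_union_of_disjoint (hab.mono (mem_powerset.1 h1) h2.1), h2.2]
          omega
      · rw [if_neg hc] at h2; exact absurd h2 (notMem_empty _)
    · intro S hS
      rw [mem_powersetCard] at hS
      rw [← inter_union_distrib_left, inter_eq_left.2 hS.1]
    · intro p hp
      rw [mem_sigma] at hp
      obtain ⟨h1, h2⟩ := hp
      by_cases hc : p.1.card ≤ k
      · rw [if_pos hc, mem_powersetCard] at h2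
        have ha1 : p.1 ⊆ a := mem_powerset.1 h1
        have hb2 : p.2 ⊆ b := h2.1
        have e1 : (p.1 ∪ p.2) ∩ a = p.1 := by
          rw [union_inter_distrib_right, inter_eq_left.2 ha1,
            Finset.disjoint_iff_inter_eq_empty.1 (hab.symm.mono hb2 le_rfl), union_empty]
        have e2 : (p.1 ∪ p.2) ∩ b = p.2 := by
          rw [union_inter_distrib_right, inter_eq_left.2 hb2,
            Finset.disjoint_iff_inter_eq_empty.1 (hab.mono ha1 le_rfl), empty_union]
        exact Sigma.ext e1 (heq_of_eq (by rw [e2]))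
      · rw [if_neg hc] at h2; exact absurd h2 (notMem_empty _)
    · intro S hS; rfl
  rw [step, sum_sigma]
  refine sum_congr rfl fun T hT => ?_
  by_cases hc : T.card ≤ k
  · rw [if_pos hc, if_pos hc]
    dsimp only
    rw [sum_const, card_powersetCard, nsmul_eq_mul]
  · rw [if_neg hc, if_neg hc, sum_empty]


open Finset in
theorem stmt_11 (l k n : ℕ) (hl : 2 ≤ l) (hk : 1 ≤ k) (hk' : k ≤ l)
    (hn : 0 < n) (hno : Odd n)
    (h : Fin (l + 1) → ℤ)
    (hh : h = fun (i : Fin (l + 1)) => if (i : ℕ) = 0 then 2 else if (i : ℕ) ≤ 2 then -1 else 0) :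
    ∑ S ∈ Finset.powersetCard k (Finset.univ : Finset (Fin (l + 1))), (∑ i ∈ S, h i) ^ n
      = (2 ^ n - 2) *
        (((l - 2).choose (k - 1) : ℤ) - if 2 ≤ k then ((l - 2).choose (k - 2) : ℤ) else 0) := by
  have h0 : (0 : ℕ) < l + 1 := by omega
  have h1 : (1 : ℕ) < l + 1 := by omega
  have h2 : (2 : ℕ) < l + 1 := by omega
  set x : Fin (l+1) := ⟨0, h0⟩ with hx
  set y : Fin (l+1) := ⟨1, h1⟩ with hy
  set z : Fin (l+1) := ⟨2, h2⟩ with hz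
  set a : Finset (Fin (l+1)) := insert x (insert y {z}) with ha
  have hxy : x ≠ y := by simp [hx, hy, Fin.ext_iff]
  have hxz : x ≠ z := by simp [hx, hz, Fin.ext_iff]
  have hyz : y ≠ z := by simp [hy, hz, Fin.ext_iff]
  have hcarda : a.card = 3 := by
    rw [ha, card_insert_of_notMem (by simp [hxy, hxz]),
      card_insert_of_notMem (by simp [hyz]), card_singleton]
  have hmem : ∀ i : Fin (l+1), i ∈ a ↔ (i : ℕ) ≤ 2 := by
    intro i
    simp only [ha, mem_insert, mem_singleton, Fin.ext_iff, hx, hy, hz]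
    omega
  have hzero : ∀ i : Fin (l+1), i ∉ a → h i = 0 := by
    intro i hi
    rw [hmem] at hi
    rw [hh]
    simp only
    rw [if_neg (by omega), if_neg hi]
  have hvx : h x = 2 := by simp [hh, hx]
  have hvy : h y = -1 := by simp [hh, hy]
  have hvz : h z = -1 := by simp [hh, hz]
  have hstep : ∀ S : Finset (Fin (l+1)), (∑ i ∈ S, h i) = ∑ i ∈ S ∩ a, h i := by
    intro S
    refine (Finset.sum_subset inter_subset_left ?_).symm
    intro i hiS hiSa
    exact hzero i (fun hia => hiSa (mem_inter.2 ⟨hiS, hia⟩))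
  have hbcard : aᶜ.card = l - 2 := by
    rw [card_compl, hcarda, Fintype.card_fin]
    omega
  calc ∑ S ∈ Finset.powersetCard k (Finset.univ : Finset (Fin (l + 1))), (∑ i ∈ S, h i) ^ n
      = ∑ S ∈ Finset.powersetCard k (a ∪ aᶜ), (∑ i ∈ S ∩ a, h i) ^ n := by
        rw [union_compl]
        exact sum_congr rfl fun S _ => by rw [hstep]
    _ = ∑ T ∈ a.powerset,
          if T.card ≤ k then ((aᶜ.card).choose (k - T.card) : ℤ) * (∑ i ∈ T, h i) ^ n else 0 :=
        key2 a aᶜ disjoint_compl_right k (fun T => (∑ i ∈ T, h i) ^ n)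
    _ = (2 ^ n - 2) *
        (((l - 2).choose (k - 1) : ℤ) - if 2 ≤ k then ((l - 2).choose (k - 2) : ℤ) else 0) := by
        have hps : ({z} : Finset (Fin (l+1))).powerset = {∅, {z}} := by
          ext t
          simp [Finset.subset_singleton_iff]
        rw [ha, Finset.sum_powerset_insert (by simp [hxy, hxz]),
          Finset.sum_powerset_insert (by simp [hyz]),
          Finset.sum_powerset_insert (by simp [hyz]), hps]
        rw [hbcard]
        simp only [Finset.sum_pair (Ne.symm (Finset.singleton_ne_empty z))]
        simp only [card_empty, card_singleton, sum_empty, sum_singleton, hvz,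
          card_insert_of_notMem (by simp [hyz] : y ∉ ({z} : Finset (Fin (l+1)))),
          card_insert_of_notMem (by simp [hxz] : x ∉ ({z} : Finset (Fin (l+1)))),
          insert_empty_eq,
          sum_insert (by simp [hyz] : y ∉ ({z} : Finset (Fin (l+1)))),
          sum_insert (by simp [hxz] : x ∉ ({z} : Finset (Fin (l+1)))),
          hvx, hvy]
        rw [show (∑ i ∈ ({x, y} : Finset (Fin (l+1))), h i) = 1 by
              rw [sum_insert (by simp [hxy]), sum_singleton, hvx, hvy]; ring,
            show (∑ i ∈ ({x, y, z} : Finset (Fin (l+1))), h i) = 0 by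
              rw [sum_insert (by simp [hxy, hxz]), sum_insert (by simp [hyz]),
                sum_singleton, hvx, hvy, hvz]; ring,
            show #({x, y} : Finset (Fin (l+1))) = 2 by
              rw [card_insert_of_notMem (by simp [hxy]), card_singleton],
            show #({x, y, z} : Finset (Fin (l+1))) = 3 by
              rw [card_insert_of_notMem (by simp [hxy, hxz]),
                card_insert_of_notMem (by simp [hyz]), card_singleton]]
        rw [zero_pow hn.ne', hno.neg_one_pow, show ((-1 : ℤ) + -1) = -2 by ring,
          show ((2 : ℤ) + -1) = 1 by ring, hno.neg_pow, one_pow, if_pos hk]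
        simp only [mul_zero, ite_self, mul_one]
        norm_num
        simp only [if_pos hk]
        by_cases hk2 : 2 ≤ k
        · simp only [if_pos hk2]; ring
        · simp only [if_neg hk2]; ring
end

section
/- Let m ≥ 0 and let π_m(H) = diag(im, i(m-2), i(m-4), ..., -im) be the diagonal (m+1)×(m+1) complex matrix with entries i(m - 2k) for k = 0, ..., m, and let π_m(X) be the (m+1)×(m+1) complex matrix with (π_m(X))_{k,k+1} = -ik and (π_m(X))_{k+1,k} = -i(m-k+1) for k = 1, ..., m and all other entries zero. Then Tr(π_m(H)^2) + 2*Tr(π_m(X)^2) = -m(m+1)(m+2). -/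
open Finset

lemma auxA (c : ℂ) (n : ℕ) : ∑ k ∈ Finset.range n, (c - 2*(k:ℂ))^2
    = (n:ℂ)*c^2 - 2*c*(n:ℂ)*((n:ℂ)-1) + 2/3*((n:ℂ)-1)*(n:ℂ)*(2*(n:ℂ)-1) := by
  induction n with
  | zero => simp
  | succ n ih => rw [Finset.sum_range_succ, ih]; push_cast; ring

lemma auxB (c : ℂ) (n : ℕ) : ∑ a ∈ Finset.range n, ((a:ℂ)+1)*(c - (a:ℂ))
    = (n:ℂ)*((n:ℂ)+1)/2 * c - ((n:ℂ)-1)*(n:ℂ)*((n:ℂ)+1)/3 := by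
  induction n with
  | zero => simp
  | succ n ih => rw [Finset.sum_range_succ, ih]; push_cast; ring

lemma auxC (m : ℕ) (e : ℕ → ℂ) :
    ∑ x ∈ Finset.range (m+1), (if x + 1 ∈ Finset.range (m+1) then e x else 0)
      = ∑ x ∈ Finset.range m, e x := by
  simp only [Finset.mem_range, add_lt_add_iff_right]
  rw [Finset.sum_range_succ, if_neg (lt_irrefl m), add_zero]
  exact Finset.sum_congr rfl fun x hx => if_pos (Finset.mem_range.mp hx)

theorem stmt_17 (m : ℕ)
    (piH piX : Matrix (Fin (m + 1)) (Fin (m + 1)) ℂ)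
    (hH : piH = Matrix.diagonal (fun k : Fin (m + 1) => Complex.I * ((m : ℂ) - 2 * (k : ℕ))))
    (hX : piX = fun a b : Fin (m + 1) =>
      if (a : ℕ) + 1 = (b : ℕ) then -Complex.I * ((a : ℕ) + 1)
      else if (b : ℕ) + 1 = (a : ℕ) then -Complex.I * ((m : ℂ) - (b : ℕ)) else 0) :
    Matrix.trace (piH * piH) + 2 * Matrix.trace (piX * piX)
      = -((m : ℂ) * (m + 1) * (m + 2)) := by
  have hH2 : Matrix.trace (piH * piH)
      = -∑ k ∈ Finset.range (m+1), ((m:ℂ) - 2*(k:ℂ))^2 := by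
    rw [hH, Matrix.diagonal_mul_diagonal, Matrix.trace_diagonal]
    rw [← Fin.sum_univ_eq_sum_range (fun k => ((m:ℂ) - 2*(k:ℂ))^2) (m+1),
      ← Finset.sum_neg_distrib]
    apply Finset.sum_congr rfl
    intro k _
    have h : Complex.I * ((m : ℂ) - 2 * (k : ℕ)) * (Complex.I * ((m : ℂ) - 2 * (k : ℕ)))
        = Complex.I^2 * ((m:ℂ) - 2*((k:ℕ):ℂ))^2 := by ring
    rw [h, Complex.I_sq]; ring
  have hX2 : Matrix.trace (piX * piX)
      = ∑ a ∈ Finset.range (m+1), ∑ b ∈ Finset.range (m+1),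
        ((if a + 1 = b then -(((a:ℂ)+1)*((m:ℂ)-(a:ℂ))) else 0)
          + (if b + 1 = a then -(((m:ℂ)-(b:ℂ))*((b:ℂ)+1)) else 0)) := by
    rw [Matrix.trace]
    simp only [Matrix.diag_apply, Matrix.mul_apply]
    simp only [hX]
    rw [← Fin.sum_univ_eq_sum_range]
    apply Finset.sum_congr rfl
    intro a _
    rw [← Fin.sum_univ_eq_sum_range]
    apply Finset.sum_congr rfl
    intro b _
    split_ifs with h1 h2
    · omega
    · linear_combination (((a:ℕ):ℂ)+1)*((m:ℂ)-((a:ℕ):ℂ)) * Complex.I_mul_I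
    · linear_combination ((m:ℂ)-((b:ℕ):ℂ))*(((b:ℕ):ℂ)+1) * Complex.I_mul_I
    · ring
  rw [hH2, hX2]
  have hs : ∑ a ∈ Finset.range (m+1), ∑ b ∈ Finset.range (m+1),
        ((if a + 1 = b then -(((a:ℂ)+1)*((m:ℂ)-(a:ℂ))) else 0)
          + (if b + 1 = a then -(((m:ℂ)-(b:ℂ))*((b:ℂ)+1)) else 0))
      = (∑ a ∈ Finset.range m, -(((a:ℂ)+1)*((m:ℂ)-(a:ℂ))))
        + ∑ b ∈ Finset.range m, -(((m:ℂ)-(b:ℂ))*((b:ℂ)+1)) := by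
    rw [Finset.sum_congr rfl (fun a _ => Finset.sum_add_distrib), Finset.sum_add_distrib]
    congr 1
    · rw [Finset.sum_congr rfl (fun a _ =>
        Finset.sum_ite_eq (Finset.range (m+1)) (a+1) (fun _ => -(((a:ℂ)+1)*((m:ℂ)-(a:ℂ)))))]
      exact auxC m _
    · rw [Finset.sum_comm]
      rw [Finset.sum_congr rfl (fun b _ =>
        Finset.sum_ite_eq (Finset.range (m+1)) (b+1) (fun _ => -(((m:ℂ)-(b:ℂ))*((b:ℂ)+1))))]
      exact auxC m _
  rw [hs]
  have h1 : ∑ b ∈ Finset.range m, -(((m:ℂ)-(b:ℂ))*((b:ℂ)+1))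
      = -∑ a ∈ Finset.range m, ((a:ℂ)+1)*((m:ℂ) - (a:ℂ)) := by
    rw [← Finset.sum_neg_distrib]; exact Finset.sum_congr rfl fun a _ => by ring
  have h2 : ∑ a ∈ Finset.range m, -(((a:ℂ)+1)*((m:ℂ)-(a:ℂ)))
      = -∑ a ∈ Finset.range m, ((a:ℂ)+1)*((m:ℂ) - (a:ℂ)) := by
    rw [← Finset.sum_neg_distrib]
  rw [h1, h2, auxA (m:ℂ) (m+1), auxB (m:ℂ) m]
  push_cast
  ring
end
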